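/- arXiv:2209.06591 — 3 statements merged into one kernel-verified Lean document; each statement's English description precedes it below -/
import Mathlib

section
/- Let G be a multigraph and D a double circuit of the bicircular matroid B(G). If P is a path in G[D] all of whose internal vertices have degree 2 in G[D], then the edge set of P is contained in a single class of the circuit partition of D (i.e., every circuit of B(G) contained in D that contains one edge of P contains all edges of P). -/
open Set Matroid

namespace Paper

variable {α : Type*}

/-- A circuit of a matroid: a minimal dependent set. -/
def IsCircuit (M : Matroid α) (C : Set α) : Prop :=
  M.Dep C ∧ ∀ x ∈ C, M.Indep (C \ {x})

/-- The rank of a set: the largest cardinality of an independent subset. -/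
noncomputable def rk (M : Matroid α) (X : Set α) : ℕ :=
  sSup {n : ℕ | ∃ I, I ⊆ X ∧ M.Indep I ∧ I.ncard = n}

/-- A double circuit: a (finite) set `D` with `r(D) = |D| - 2` such that deleting any
single element does not decrease the rank. -/
def DoubleCircuit (M : Matroid α) (D : Set α) : Prop :=
  D ⊆ M.E ∧ D.Finite ∧ rk M D + 2 = D.ncard ∧ ∀ d ∈ D, rk M (D \ {d}) = rk M D

/-- `P` is the circuit partition of `D`: a partition of `D` into nonempty classes such
that the circuits of `M` contained in `D` are exactly the complements (in `D`) of the
classes. -/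
def IsCircuitPartition (M : Matroid α) (D : Set α) (P : Set (Set α)) : Prop :=
  (∀ p ∈ P, p.Nonempty) ∧ (∀ p ∈ P, p ⊆ D) ∧ (∀ d ∈ D, ∃! p, p ∈ P ∧ d ∈ p) ∧
    ∀ C, (IsCircuit M C ∧ C ⊆ D) ↔ ∃ p ∈ P, C = D \ p

/-- A positive double circuit: one whose circuit partition has strictly more singular
(size-one) classes than multiple classes. -/
def PositiveDoubleCircuit (M : Matroid α) (D : Set α) : Prop :=
  DoubleCircuit M D ∧ ∃ P, IsCircuitPartition M D P ∧
    {p ∈ P | p.ncard ≠ 1}.ncard < {p ∈ P | p.ncard = 1}.ncard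

/-- A hyperplane (copoint): a maximal proper flat. -/
def IsHyperplane (M : Matroid α) (H : Set α) : Prop :=
  M.IsFlat H ∧ H ≠ M.E ∧ ∀ F, M.IsFlat F → H ⊂ F → F = M.E

/-- A coline: a flat of codimension two. -/
def IsColine (M : Matroid α) (L : Set α) : Prop :=
  M.IsFlat L ∧ rk M L + 2 = rk M M.E

/-- `P` is the copoint partition of the coline `L`: a partition of `M.E \ L` such that
the hyperplanes containing `L` are exactly the sets `L ∪ p` for classes `p`. -/
def IsCopointPartition (M : Matroid α) (L : Set α) (P : Set (Set α)) : Prop :=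
  (∀ p ∈ P, p.Nonempty) ∧ (∀ p ∈ P, p ⊆ M.E \ L) ∧ (∀ d ∈ M.E \ L, ∃! p, p ∈ P ∧ d ∈ p) ∧
    ∀ H, (IsHyperplane M H ∧ L ⊆ H) ↔ ∃ p ∈ P, H = L ∪ p

/-- A positive coline: one whose copoint partition has strictly more singular (size-one)
classes than multiple classes. -/
def PositiveColine (M : Matroid α) (L : Set α) : Prop :=
  IsColine M L ∧ ∃ P, IsCopointPartition M L P ∧
    {p ∈ P | p.ncard ≠ 1}.ncard < {p ∈ P | p.ncard = 1}.ncard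

/-- A simple matroid: no loops and no parallel pairs. -/
def SimpleM (M : Matroid α) : Prop :=
  (∀ e ∈ M.E, M.Indep {e}) ∧ ∀ e f, e ∈ M.E → f ∈ M.E → e ≠ f → M.Indep {e, f}

/-- A coloop: an element contained in every base. -/
def IsColoop (M : Matroid α) (e : α) : Prop :=
  e ∈ M.E ∧ ∀ B, M.IsBase B → e ∈ B

open Classical in
/-- The permutation of `α` exchanging `e` and `f`. -/
noncomputable def swapMap (e f : α) (x : α) : α :=
  if x = e then f else if x = f then e else x

/-- `e` and `f` are clones in `M` if exchanging them is an automorphism of `M`. -/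
def Clones (M : Matroid α) (e f : α) : Prop :=
  e ∈ M.E ∧ f ∈ M.E ∧ ∀ I, M.Indep I ↔ M.Indep (swapMap e f '' I)

/-- Contraction of a set, defined by duality with deletion. -/
noncomputable def contract (M : Matroid α) (C : Set α) : Matroid α := (M✶ ↾ (M.E \ C))✶

/-- Deletion of a set. -/
noncomputable def delete (M : Matroid α) (D : Set α) : Matroid α := M ↾ (M.E \ D)

/-- `N` is a minor of `M`. -/
def IsMinorOf (N M : Matroid α) : Prop :=
  ∃ C D, C ⊆ M.E ∧ D ⊆ M.E ∧ Disjoint C D ∧ N = Paper.delete (contract M C) D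

universe u
variable {α : Type u}



/-- A multigraph on vertex type `V` with edges labelled by elements of `E ⊆ α`. -/
structure Multigraph (V : Type*) (α : Type*) where
  E : Set α
  ends : α → Sym2 V

/-- The vertices incident with an edge set `D`. -/
def Multigraph.verts {V : Type*} (G : Multigraph V α) (D : Set α) : Set V :=
  {v | ∃ e ∈ D, v ∈ G.ends e}

/-- The degree of `v` in the subgraph with edge set `D` (loops count twice). -/
noncomputable def Multigraph.deg {V : Type*} (G : Multigraph V α) (D : Set α) (v : V) : ℕ :=
  {e ∈ D | v ∈ G.ends e ∧ ¬ (G.ends e).IsDiag}.ncard +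
    2 * {e ∈ D | G.ends e = Sym2.diag v}.ncard

/-- `M` is the bicircular matroid of `G`: an edge set is independent iff every component
of the induced subgraph contains at most one cycle; equivalently, iff every finite
subset `J` is incident with at least `|J|` vertices. -/
def IsBicircularOf {V : Type*} (G : Multigraph V α) (M : Matroid α) : Prop :=
  M.E = G.E ∧ ∀ I, M.Indep I ↔ I ⊆ G.E ∧ ∀ J ⊆ I, J.Finite → J.ncard ≤ (G.verts J).ncard

/-- `M` is a bicircular matroid. -/
def IsBicircular (M : Matroid α) : Prop :=
  ∃ (V : Type u) (G : Multigraph V α), IsBicircularOf G M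

/-- `G` has girth at least five: every nonempty set of at most four edges is incident
with strictly more vertices than it has edges (i.e. contains no cycle). -/
def GirthAtLeastFive {V : Type*} (G : Multigraph V α) : Prop :=
  ∀ J ⊆ G.E, J.Finite → J.Nonempty → J.ncard ≤ 4 → J.ncard < (G.verts J).ncard




lemma mem_sym2_finite {V : Type*} (z : Sym2 V) : {v | v ∈ z}.Finite := by
  induction z using Sym2.ind with
  | _ a b =>
    apply Set.Finite.subset ((Set.finite_singleton b).insert a)
    intro v hv
    simp only [Set.mem_setOf_eq, Sym2.mem_iff] at hv
    simpa using hv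

lemma verts_finite {V : Type*} (G : Multigraph V α) {J : Set α} (hJ : J.Finite) :
    (G.verts J).Finite := by
  have h : G.verts J ⊆ ⋃ x ∈ J, {v | v ∈ G.ends x} := by
    rintro v ⟨x, hx, hv⟩
    exact Set.mem_biUnion hx hv
  exact ((hJ.biUnion (fun x _ => mem_sym2_finite (G.ends x))).subset h)

lemma eq_diag_of_mem_of_isDiag {V : Type*} {z : Sym2 V} {w : V}
    (h1 : w ∈ z) (h2 : z.IsDiag) : z = Sym2.diag w := by
  induction z using Sym2.ind with
  | _ p q =>
    rw [Sym2.mk_isDiag_iff] at h2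
    subst h2
    rw [Sym2.mem_iff] at h1
    rcases h1 with rfl | rfl <;> rfl

lemma exists_switch (f : ℕ → Prop) : ∀ j i, i ≤ j → f i → ¬ f j →
    ∃ k, i ≤ k ∧ k < j ∧ f k ∧ ¬ f (k + 1) := by
  intro j
  induction j with
  | zero =>
    intro i hi hfi hfj
    exact absurd (Nat.le_zero.mp hi ▸ hfi) hfj
  | succ m ih =>
    intro i hi hfi hfj
    rcases eq_or_lt_of_le hi with rfl | hlt
    · exact absurd hfi hfj
    · by_cases hm : f m
      · exact ⟨m, Nat.lt_succ_iff.mp hlt, Nat.lt_succ_self m, hm, hfj⟩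
      · obtain ⟨k, hk1, hk2, hk3, hk4⟩ := ih i (Nat.lt_succ_iff.mp hlt) hfi hm
        exact ⟨k, hk1, hk2.trans (Nat.lt_succ_self m), hk3, hk4⟩

/-- the edge set of a path in `G[D]` whose internal vertices all have
degree `2` in `G[D]` is contained in a single class of the circuit partition of the
double circuit `D`; equivalently, every circuit of `B(G)` contained in `D` containing
one edge of the path contains all of them. -/
theorem path_edges_in_one_circuit_class {α : Type u} {V : Type*}
    (G : Multigraph V α) (M : Matroid α) (hGM : IsBicircularOf G M)
    (D : Set α) (hD : DoubleCircuit M D)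
    (n : ℕ) (hn : 0 < n) (v : Fin (n + 1) → V) (e : Fin n → α)
    (hv : Function.Injective v) (he : Function.Injective e)
    (heD : ∀ i, e i ∈ D)
    (hends : ∀ i : Fin n, G.ends (e i) = s(v i.castSucc, v i.succ))
    (hint : ∀ j : Fin (n + 1), j ≠ 0 → j ≠ Fin.last n → G.deg D (v j) = 2) :
    (∀ C, IsCircuit M C → C ⊆ D → (∃ i, e i ∈ C) → ∀ i, e i ∈ C) ∧
      ∀ P, IsCircuitPartition M D P → ∃ p ∈ P, Set.range e ⊆ p := by
  classical
  obtain ⟨hME, hIndep⟩ := hGM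
  obtain ⟨hDE, hDfin, -, -⟩ := hD
  have hDG : D ⊆ G.E := hME ▸ hDE
  have part1 : ∀ C, IsCircuit M C → C ⊆ D → (∃ i, e i ∈ C) → ∀ i, e i ∈ C := by
    intro C hC hCD hex i
    by_contra hiC
    obtain ⟨i0, hi0⟩ := hex
    have hCE : C ⊆ G.E := fun x hx => hDG (hCD hx)
    -- the pendant contradiction
    have no_pendant : ∀ (w : V) (c : α), c ∈ C → w ∈ G.ends c →
        (∀ x ∈ C, w ∈ G.ends x → x = c) → False := by
      intro w c hcC hwc honlyc
      have hCnotind : ¬ M.Indep C := hC.1.1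
      rw [hIndep] at hCnotind
      push_neg at hCnotind
      obtain ⟨J, hJC, hJfin, hJcard⟩ := hCnotind hCE
      have hind := hC.2 c hcC
      rw [hIndep] at hind
      by_cases hcJ : c ∈ J
      · set J' := J \ {c} with hJ'
        have hJ'sub : J' ⊆ C \ {c} := Set.diff_subset_diff_left hJC
        have hwJ : w ∈ G.verts J := ⟨c, hcJ, hwc⟩
        have hwnot : w ∉ G.verts J' := by
          rintro ⟨x, hx, hwx⟩
          exact hx.2 (honlyc x (hJC hx.1) hwx)
        have hvsub : G.verts J' ⊆ G.verts J := by
          rintro u ⟨x, hx, hux⟩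
          exact ⟨x, hx.1, hux⟩
        have hss : G.verts J' ⊂ G.verts J := ⟨hvsub, fun h => hwnot (h hwJ)⟩
        have hlt : (G.verts J').ncard < (G.verts J).ncard :=
          Set.ncard_lt_ncard hss (verts_finite G hJfin)
        have hJ'card : J'.ncard = J.ncard - 1 := Set.ncard_diff_singleton_of_mem hcJ
        have hJpos : 0 < J.ncard := (Set.ncard_pos hJfin).mpr ⟨c, hcJ⟩
        have hle := hind.2 J' hJ'sub (hJfin.subset Set.diff_subset)
        omega
      · have hsub : J ⊆ C \ {c} := Set.subset_diff_singleton hJC hcJ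
        have hle := hind.2 J hsub hJfin
        omega
    -- key: adjacent path edges cannot be split by C
    have key : ∀ (k : ℕ) (hk : k + 1 < n),
        ((e ⟨k, Nat.lt_of_succ_lt hk⟩ ∈ C ∧ e ⟨k + 1, hk⟩ ∉ C) ∨
          (e ⟨k, Nat.lt_of_succ_lt hk⟩ ∉ C ∧ e ⟨k + 1, hk⟩ ∈ C)) → False := by
      intro k hk hcase
      set a : Fin n := ⟨k, Nat.lt_of_succ_lt hk⟩ with ha
      set b : Fin n := ⟨k + 1, hk⟩ with hb
      set w : V := v ⟨k + 1, by omega⟩ with hw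
      have hsucc : a.succ = (⟨k + 1, by omega⟩ : Fin (n + 1)) := by
        ext; simp [ha]
      have hcast : b.castSucc = (⟨k + 1, by omega⟩ : Fin (n + 1)) := by
        ext; simp [hb]
      have hwa : w ∈ G.ends (e a) := by
        rw [hends a, hsucc, Sym2.mem_iff]; right; rfl
      have hwb : w ∈ G.ends (e b) := by
        rw [hends b, hcast, Sym2.mem_iff]; left; rfl
      have hnda : ¬ (G.ends (e a)).IsDiag := by
        rw [hends a, Sym2.mk_isDiag_iff]
        intro h
        have := hv h
        have := congrArg Fin.val this
        simp [ha] at this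
      have hndb : ¬ (G.ends (e b)).IsDiag := by
        rw [hends b, Sym2.mk_isDiag_iff]
        intro h
        have := hv h
        have := congrArg Fin.val this
        simp [hb] at this
      have hab : e a ≠ e b := by
        intro h
        have := congrArg Fin.val (he h)
        simp [ha, hb] at this
      -- degree analysis
      have hjne0 : (⟨k + 1, by omega⟩ : Fin (n + 1)) ≠ 0 := by
        intro h; have := congrArg Fin.val h; simp at this
      have hjnel : (⟨k + 1, by omega⟩ : Fin (n + 1)) ≠ Fin.last n := by
        intro h; have := congrArg Fin.val h; simp [Fin.last] at this; omega
      have hdeg : G.deg D w = 2 := hint _ hjne0 hjnel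
      unfold Multigraph.deg at hdeg
      set S1 := {x ∈ D | w ∈ G.ends x ∧ ¬ (G.ends x).IsDiag} with hS1def
      set S2 := {x ∈ D | G.ends x = Sym2.diag w} with hS2def
      have hS1fin : S1.Finite := hDfin.subset (Set.sep_subset _ _)
      have hS2fin : S2.Finite := hDfin.subset (Set.sep_subset _ _)
      have hpairsub : ({e a, e b} : Set α) ⊆ S1 := by
        rintro x (rfl | rfl)
        · exact ⟨heD a, hwa, hnda⟩
        · exact ⟨heD b, hwb, hndb⟩
      have hpaircard : ({e a, e b} : Set α).ncard = 2 := Set.ncard_pair hab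
      have h2le : 2 ≤ S1.ncard := hpaircard ▸ Set.ncard_le_ncard hpairsub hS1fin
      have hS1card : S1.ncard = 2 := by omega
      have hS2card : S2.ncard = 0 := by omega
      have hS1eq : S1 = {e a, e b} :=
        (Set.eq_of_subset_of_ncard_le hpairsub (by omega) hS1fin).symm
      have hS2eq : S2 = ∅ := (Set.ncard_eq_zero hS2fin).mp hS2card
      have honly : ∀ x ∈ D, w ∈ G.ends x → x = e a ∨ x = e b := by
        intro x hx hwx
        by_cases hd : (G.ends x).IsDiag
        · exfalso
          have : x ∈ S2 := ⟨hx, eq_diag_of_mem_of_isDiag hwx hd⟩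
          rw [hS2eq] at this
          exact this
        · have : x ∈ S1 := ⟨hx, hwx, hd⟩
          rw [hS1eq] at this
          exact this
      rcases hcase with ⟨h1, h2⟩ | ⟨h1, h2⟩
      · exact no_pendant w (e a) h1 hwa (fun x hx hwx => by
          rcases honly x (hCD hx) hwx with rfl | rfl
          · rfl
          · exact absurd hx h2)
      · exact no_pendant w (e b) h2 hwb (fun x hx hwx => by
          rcases honly x (hCD hx) hwx with rfl | rfl
          · exact absurd hx h1
          · rfl)
    -- find a switch point
    set f : ℕ → Prop := fun k => ∀ h : k < n, e ⟨k, h⟩ ∈ C with hf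
    have hfi0 : f i0.val := by
      intro h
      simpa using hi0
    have hfi : ¬ f i.val := by
      intro h
      exact hiC (by simpa using h i.isLt)
    rcases le_total i0.val i.val with hle | hle
    · obtain ⟨k, hk1, hk2, hk3, hk4⟩ := exists_switch f i.val i0.val hle hfi0 hfi
      have hkn : k + 1 < n := lt_of_le_of_lt hk2 i.isLt
      have h1 : e ⟨k, Nat.lt_of_succ_lt hkn⟩ ∈ C := by
        rw [hf] at hk3
        exact hk3 (Nat.lt_of_succ_lt hkn)
      have h2 : e ⟨k + 1, hkn⟩ ∉ C := by
        rw [hf] at hk4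
        intro hmem
        exact hk4 (fun h => hmem)
      exact key k hkn (Or.inl ⟨h1, h2⟩)
    · obtain ⟨k, hk1, hk2, hk3, hk4⟩ :=
        exists_switch (fun m => ¬ f m) i0.val i.val hle hfi (not_not_intro hfi0)
      have hkn : k + 1 < n := lt_of_le_of_lt hk2 i0.isLt
      rw [not_not] at hk4
      refine key k hkn (Or.inr ⟨?_, hk4 hkn⟩)
      intro hmem
      exact hk3 (fun h => hmem)
  refine ⟨part1, ?_⟩
  intro P hP
  obtain ⟨hPne, hPsub, hPpart, hPcirc⟩ := hP
  obtain ⟨p, ⟨hpP, hep⟩, -⟩ := hPpart (e ⟨0, hn⟩) (heD _)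
  refine ⟨p, hpP, ?_⟩
  rintro x ⟨i, rfl⟩
  by_contra hxp
  have hcirc : IsCircuit M (D \ p) ∧ D \ p ⊆ D := (hPcirc (D \ p)).mpr ⟨p, hpP, rfl⟩
  have hmem : e i ∈ D \ p := ⟨heD i, hxp⟩
  have hall := part1 (D \ p) hcirc.1 hcirc.2 ⟨i, hmem⟩ ⟨0, hn⟩
  exact hall.2 hep


end Paper
end

section
/- If G is a multigraph with girth at least 5, then the bicircular matroid B(G) has no positive double circuits. -/
open Set Matroid

namespace Paper

variable {α : Type*}

universe u
variable {α : Type u}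



-- auxiliary lemmas to be inserted before the theorem
section AuxLemmas

variable {V : Type*} (G : Multigraph V α)

lemma verts_mono {X Y : Set α} (h : X ⊆ Y) : G.verts X ⊆ G.verts Y := by
  rintro v ⟨e, he, hv⟩; exact ⟨e, h he, hv⟩

lemma verts_union (X Y : Set α) : G.verts (X ∪ Y) = G.verts X ∪ G.verts Y := by
  ext v
  constructor
  · rintro ⟨e, he | he, hv⟩
    exacts [Or.inl ⟨e, he, hv⟩, Or.inr ⟨e, he, hv⟩]
  · rintro (⟨e, he, hv⟩ | ⟨e, he, hv⟩)
    exacts [⟨e, Or.inl he, hv⟩, ⟨e, Or.inr he, hv⟩]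

lemma mem_sym2_eq_pair (z : Sym2 V) : ∃ a b : V, {v | v ∈ z} = {a, b} := by
  induction z using Sym2.ind with
  | _ a b => exact ⟨a, b, by ext v; simp [Sym2.mem_iff]⟩

lemma verts_finite_s7 {X : Set α} (hX : X.Finite) : (G.verts X).Finite := by
  have hsub : G.verts X ⊆ ⋃ e ∈ X, {v | v ∈ G.ends e} := by
    rintro v ⟨e, he, hv⟩; exact Set.mem_biUnion he hv
  refine Set.Finite.subset (Set.Finite.biUnion hX fun e _ => ?_) hsub
  obtain ⟨a, b, hab⟩ := mem_sym2_eq_pair (G.ends e)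
  rw [hab]
  exact (Set.finite_singleton b).insert a

lemma verts_singleton (e : α) : G.verts {e} = {v | v ∈ G.ends e} := by
  ext v
  constructor
  · rintro ⟨e', he', hv⟩
    rcases he' with rfl
    exact hv
  · intro hv; exact ⟨e, rfl, hv⟩

end AuxLemmas

/-- There is an independent subset of `D` realizing `rk M D`, when `D` is finite. -/
lemma exists_indep_ncard_rk {M : Matroid α} {D : Set α} (hD : D.Finite) :
    ∃ I, I ⊆ D ∧ M.Indep I ∧ I.ncard = rk M D := by
  have hne : {n : ℕ | ∃ I, I ⊆ D ∧ M.Indep I ∧ I.ncard = n}.Nonempty :=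
    ⟨0, ∅, Set.empty_subset _, M.empty_indep, Set.ncard_empty _⟩
  have hbdd : BddAbove {n : ℕ | ∃ I, I ⊆ D ∧ M.Indep I ∧ I.ncard = n} := by
    refine ⟨D.ncard, ?_⟩
    rintro n ⟨I, hID, -, rfl⟩
    exact Set.ncard_le_ncard hID hD
  exact Nat.sSup_mem hne hbdd

/-- Basic numerical facts about a finite circuit of a bicircular matroid of a graph
with girth at least five. -/
lemma circuit_facts {V : Type*} {G : Multigraph V α} {M : Matroid α}
    (hGM : IsBicircularOf G M) (hg : GirthAtLeastFive G)
    {C : Set α} (hC : IsCircuit M C) (hCfin : C.Finite) :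
    (G.verts C).ncard + 1 = C.ncard ∧ (∀ x ∈ C, G.verts (C \ {x}) = G.verts C) ∧
      5 ≤ C.ncard := by
  have hCE : C ⊆ G.E := by
    have := hC.1.subset_ground
    rwa [hGM.1] at this
  -- C is dependent, hence the Hall condition fails for some J ⊆ C, which must be C itself
  have hdep : ¬ M.Indep C := hC.1.not_indep
  have hJ : ∃ J, J ⊆ C ∧ J.Finite ∧ (G.verts J).ncard < J.ncard := by
    by_contra hcon
    push_neg at hcon
    exact hdep ((hGM.2 C).2 ⟨hCE, fun J hJC hJfin => hcon J hJC hJfin⟩)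
  obtain ⟨J, hJC, hJfin, hJlt⟩ := hJ
  have hJeq : J = C := by
    by_contra hne
    obtain ⟨x, hxC, hxJ⟩ := Set.exists_of_ssubset ⟨hJC, fun h => hne (hJC.antisymm h)⟩
    have hind := (hGM.2 (C \ {x})).1 (hC.2 x hxC)
    have := hind.2 J (fun y hy => ⟨hJC hy, fun h => hxJ (h ▸ hy)⟩) hJfin
    omega
  rw [hJeq] at hJlt
  -- C is nonempty
  have hCne : C.Nonempty := by
    rw [Set.nonempty_iff_ne_empty]
    rintro rfl
    simp at hJlt
  obtain ⟨x0, hx0⟩ := hCne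
  -- key per-element computation
  have key : ∀ x ∈ C, G.verts (C \ {x}) = G.verts C ∧
      (G.verts C).ncard + 1 = C.ncard := by
    intro x hx
    have hind := (hGM.2 (C \ {x})).1 (hC.2 x hx)
    have h1 : (C \ {x}).ncard ≤ (G.verts (C \ {x})).ncard :=
      hind.2 (C \ {x}) subset_rfl (hCfin.subset Set.diff_subset)
    have h2 : (G.verts (C \ {x})).ncard ≤ (G.verts C).ncard :=
      Set.ncard_le_ncard (verts_mono G Set.diff_subset) (verts_finite_s7 G hCfin)
    have h3 : (C \ {x}).ncard + ({x} : Set α).ncard = C.ncard :=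
      Set.ncard_diff_add_ncard_of_subset (Set.singleton_subset_iff.2 hx) hCfin
    rw [Set.ncard_singleton] at h3
    have h4 : (G.verts C).ncard + 1 = C.ncard := by omega
    refine ⟨?_, h4⟩
    exact Set.eq_of_subset_of_ncard_le (verts_mono G Set.diff_subset) (by omega)
      (verts_finite_s7 G hCfin)
  have hcard : (G.verts C).ncard + 1 = C.ncard := (key x0 hx0).2
  refine ⟨hcard, fun x hx => (key x hx).1, ?_⟩
  by_contra h4
  have := hg C hCE hCfin ⟨x0, hx0⟩ (by omega)
  omega

/-- if `G` has girth at least `5`, then the bicircular matroid `B(G)` has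
no positive double circuits. -/
theorem girth_ge_five_no_positive_double_circuit {α : Type u} {V : Type*}
    (G : Multigraph V α) (M : Matroid α) (hGM : IsBicircularOf G M)
    (hg : GirthAtLeastFive G) :
    ¬ ∃ D, PositiveDoubleCircuit M D := by
  classical
  rintro ⟨D, ⟨hDE, hDfin, hrk, -⟩, P, ⟨hPne, hPsub, hPuniq, hPcirc⟩, hlt⟩
  have hDG : D ⊆ G.E := by rw [← hGM.1]; exact hDE
  set Sing := {p ∈ P | p.ncard = 1} with hSingdef
  set Mult := {p ∈ P | p.ncard ≠ 1} with hMultdef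
  have hPfin : P.Finite := hDfin.finite_subsets.subset (fun p hp => hPsub p hp)
  have hSingfin : Sing.Finite := hPfin.subset (fun p hp => hp.1)
  have hMultfin : Mult.Finite := hPfin.subset (fun p hp => hp.1)
  have huniq : ∀ d ∈ D, ∀ p ∈ P, ∀ q ∈ P, d ∈ p → d ∈ q → p = q := by
    intro d hd p hp q hq hdp hdq
    obtain ⟨r, -, hr⟩ := hPuniq d hd
    exact (hr p ⟨hp, hdp⟩).trans (hr q ⟨hq, hdq⟩).symm
  have hclass : ∀ d ∈ D, ∃ p, p ∈ P ∧ d ∈ p := fun d hd => (hPuniq d hd).exists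
  have hcirc : ∀ p ∈ P, IsCircuit M (D \ p) := fun p hp =>
    ((hPcirc (D \ p)).2 ⟨p, hp, rfl⟩).1
  have hcf : ∀ p ∈ P, (G.verts (D \ p)).ncard + 1 = (D \ p).ncard ∧
      (∀ x ∈ D \ p, G.verts ((D \ p) \ {x}) = G.verts (D \ p)) ∧ 5 ≤ (D \ p).ncard :=
    fun p hp => circuit_facts hGM hg (hcirc p hp) (hDfin.subset Set.diff_subset)
  set S := ⋃₀ Sing with hSdef
  have hSsub : S ⊆ D := Set.sUnion_subset fun p hp => hPsub p hp.1
  have hSfin : S.Finite := hDfin.subset hSsub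
  have hsingl : ∀ p ∈ Sing, ∀ d ∈ p, p = {d} := by
    intro p hp d hd
    obtain ⟨a, rfl⟩ := Set.ncard_eq_one.1 hp.2
    rw [Set.mem_singleton_iff] at hd
    rw [hd]
  have hmemS : ∀ d, d ∈ S ↔ d ∈ D ∧ {d} ∈ Sing := by
    intro d
    constructor
    · rintro ⟨p, hp, hdp⟩
      have he := hsingl p hp d hdp
      exact ⟨hPsub p hp.1 hdp, he ▸ hp⟩
    · rintro ⟨hd, h1⟩
      exact ⟨{d}, h1, rfl⟩
  have hSingeq : Sing = (fun x => ({x} : Set α)) '' S := by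
    ext p
    constructor
    · intro hp
      obtain ⟨a, ha⟩ := Set.ncard_eq_one.1 hp.2
      refine ⟨a, ⟨p, hp, by rw [ha]; rfl⟩, ha.symm⟩
    · rintro ⟨x, hx, rfl⟩
      exact ((hmemS x).1 hx).2
  have hScard : S.ncard = Sing.ncard := by
    rw [hSingeq, Set.ncard_image_of_injective _ Set.singleton_injective]
  have hVDge : D.ncard ≤ (G.verts D).ncard + 2 := by
    obtain ⟨I, hID, hI, hIcard⟩ := exists_indep_ncard_rk (M := M) hDfin
    have h1 := ((hGM.2 I).1 hI).2 I subset_rfl (hDfin.subset hID)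
    have h2 : (G.verts I).ncard ≤ (G.verts D).ncard :=
      Set.ncard_le_ncard (verts_mono G hID) (verts_finite_s7 G hDfin)
    omega
  by_cases hs3 : Sing.ncard ≤ 3
  · by_cases hm1 : Mult.ncard ≤ 1
    · -- at most one non-singular class
      have hSne : Sing.Nonempty := (Set.ncard_pos hSingfin).1 (by omega)
      obtain ⟨p, hpP, hother⟩ : ∃ p, p ∈ P ∧ ∀ q ∈ P, q ≠ p → q.ncard = 1 := by
        rcases Set.eq_empty_or_nonempty Mult with hM0 | ⟨p, hpM⟩
        · obtain ⟨p0, hp0⟩ := hSne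
          refine ⟨p0, hp0.1, fun q hq _ => ?_⟩
          by_contra hq1
          exact (Set.eq_empty_iff_forall_notMem.1 hM0 q) ⟨hq, hq1⟩
        · refine ⟨p, hpM.1, fun q hq hqp => ?_⟩
          by_contra hq1
          have h2 : 1 < Mult.ncard :=
            (Set.one_lt_ncard hMultfin).2 ⟨q, ⟨hq, hq1⟩, p, hpM, hqp⟩
          omega
      have hsub : D \ p ⊆ S := by
        rintro d ⟨hd, hdp⟩
        obtain ⟨q, hqP, hdq⟩ := hclass d hd
        have hq1 : q.ncard = 1 := hother q hqP (fun h => hdp (h ▸ hdq))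
        exact (hmemS d).2 ⟨hd, (hsingl q ⟨hqP, hq1⟩ d hdq) ▸ (⟨hqP, hq1⟩ : q ∈ Sing)⟩
      have h5 := (hcf p hpP).2.2
      have h6 := Set.ncard_le_ncard hsub hSfin
      omega
    · -- exactly two non-singular classes
      have hm2 : Mult.ncard = 2 := by omega
      obtain ⟨p, hpM, q, hqM, hpq⟩ := (Set.one_lt_ncard hMultfin).1 (by omega)
      have hpP := hpM.1
      have hqP := hqM.1
      have hMeq : Mult = {p, q} := by
        refine (Set.eq_of_subset_of_ncard_le ?_ ?_ hMultfin).symm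
        · rintro r (rfl | rfl)
          exacts [hpM, hqM]
        · rw [hm2, Set.ncard_pair hpq]
      set R := D \ (p ∪ q) with hRdef
      have hRS : R ⊆ S := by
        rintro d ⟨hd, hdpq⟩
        obtain ⟨r, hrP, hdr⟩ := hclass d hd
        have hr1 : r.ncard = 1 := by
          by_contra h1
          have hrM : r ∈ Mult := ⟨hrP, h1⟩
          rw [hMeq] at hrM
          rcases hrM with rfl | rfl
          · exact hdpq (Or.inl hdr)
          · exact hdpq (Or.inr hdr)
        exact (hmemS d).2 ⟨hd, (hsingl r ⟨hrP, hr1⟩ d hdr) ▸ (⟨hrP, hr1⟩ : r ∈ Sing)⟩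
      have hSR : S ⊆ R := by
        intro d hd
        obtain ⟨hdD, hdSing⟩ := (hmemS d).1 hd
        refine ⟨hdD, ?_⟩
        rintro (hdp | hdq)
        · refine hpM.2 ?_
          rw [huniq d hdD p hpP {d} hdSing.1 hdp rfl]
          exact Set.ncard_singleton d
        · refine hqM.2 ?_
          rw [huniq d hdD q hqP {d} hdSing.1 hdq rfl]
          exact Set.ncard_singleton d
      have hSneR : S.Nonempty := by
        have hSne : Sing.Nonempty := (Set.ncard_pos hSingfin).1 (by omega)
        obtain ⟨p0, hp0⟩ := hSne
        obtain ⟨a, ha⟩ := Set.ncard_eq_one.1 hp0.2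
        exact ⟨a, p0, hp0, by rw [ha]; rfl⟩
      have hRne : R.Nonempty := hSneR.mono hSR
      have hRfin : R.Finite := hDfin.subset Set.diff_subset
      have hRcard : R.ncard ≤ 3 := by
        have := Set.ncard_le_ncard hRS hSfin
        omega
      have hgR := hg R (fun x hx => hDG hx.1) hRfin hRne (by omega)
      have hdisjpq : Disjoint p q := by
        rw [Set.disjoint_left]
        intro a hap haq
        exact hpq (huniq a (hPsub p hpP hap) p hpP q hqP hap haq)
      have h1 := (hcf p hpP).1
      have h2 := (hcf q hqP).1
      have h3 : (D \ p).ncard + p.ncard = D.ncard :=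
        Set.ncard_diff_add_ncard_of_subset (hPsub p hpP) hDfin
      have h4 : (D \ q).ncard + q.ncard = D.ncard :=
        Set.ncard_diff_add_ncard_of_subset (hPsub q hqP) hDfin
      have h5 : R.ncard + (p ∪ q).ncard = D.ncard :=
        Set.ncard_diff_add_ncard_of_subset
          (Set.union_subset (hPsub p hpP) (hPsub q hqP)) hDfin
      have h6 : (p ∪ q).ncard = p.ncard + q.ncard :=
        Set.ncard_union_eq hdisjpq (hDfin.subset (hPsub p hpP)) (hDfin.subset (hPsub q hqP))
      have h7 : (G.verts (D \ p) ∪ G.verts (D \ q)).ncard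
            + (G.verts (D \ p) ∩ G.verts (D \ q)).ncard
          = (G.verts (D \ p)).ncard + (G.verts (D \ q)).ncard :=
        Set.ncard_union_add_ncard_inter _ _
          (verts_finite_s7 G (hDfin.subset Set.diff_subset))
          (verts_finite_s7 G (hDfin.subset Set.diff_subset))
      have hun : (D \ p) ∪ (D \ q) = D := by
        ext x
        constructor
        · rintro (hx | hx)
          exacts [hx.1, hx.1]
        · intro hx
          by_cases hxp : x ∈ p
          · exact Or.inr ⟨hx, fun hxq => (Set.disjoint_left.1 hdisjpq hxp) hxq⟩
          · exact Or.inl ⟨hx, hxp⟩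
      have h8 : G.verts (D \ p) ∪ G.verts (D \ q) = G.verts D := by
        rw [← verts_union, hun]
      have h9 : (G.verts R).ncard ≤ (G.verts (D \ p) ∩ G.verts (D \ q)).ncard := by
        refine Set.ncard_le_ncard ?_
          ((verts_finite_s7 G (hDfin.subset Set.diff_subset)).inter_of_left _)
        intro v hv
        refine ⟨verts_mono G ?_ hv, verts_mono G ?_ hv⟩
        · rintro x ⟨hx1, hx2⟩
          exact ⟨hx1, fun h => hx2 (Or.inl h)⟩
        · rintro x ⟨hx1, hx2⟩
          exact ⟨hx1, fun h => hx2 (Or.inr h)⟩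
      rw [h8] at h7
      omega
  · -- at least four singular classes : degree argument
    push_neg at hs3
    obtain ⟨p1, hp1, p2, hp2, hp12⟩ := (Set.one_lt_ncard hSingfin).1 (by omega)
    obtain ⟨d1, hd1⟩ := Set.ncard_eq_one.1 hp1.2
    obtain ⟨d2, hd2⟩ := Set.ncard_eq_one.1 hp2.2
    have hd1D : d1 ∈ D := hPsub p1 hp1.1 (by rw [hd1]; rfl)
    have hd2D : d2 ∈ D := hPsub p2 hp2.1 (by rw [hd2]; rfl)
    have hd12 : d1 ≠ d2 := by
      rintro rfl
      exact hp12 (by rw [hd1, hd2])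
    have hd2p1 : d2 ∉ p1 := by
      rw [hd1, Set.mem_singleton_iff]
      exact hd12.symm
    have hVD : (G.verts D).ncard + 2 = D.ncard := by
      set R := D \ (p1 ∪ p2) with hRdef
      have hRsub : R ⊆ (D \ p1) \ {d2} := by
        rintro x ⟨hx, hxpq⟩
        refine ⟨⟨hx, fun h => hxpq (Or.inl h)⟩, fun h => hxpq (Or.inr ?_)⟩
        rw [Set.mem_singleton_iff] at h
        rw [hd2, h]
        rfl
      have hRindep : M.Indep R :=
        ((hcirc p1 hp1.1).2 d2 ⟨hd2D, hd2p1⟩).subset hRsub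
      have hRHall : R.ncard ≤ (G.verts R).ncard :=
        ((hGM.2 R).1 hRindep).2 R subset_rfl (hDfin.subset Set.diff_subset)
      have hdisjpq : Disjoint p1 p2 := by
        rw [Set.disjoint_left]
        intro a hap haq
        exact hp12 (huniq a (hPsub p1 hp1.1 hap) p1 hp1.1 p2 hp2.1 hap haq)
      have h1 := (hcf p1 hp1.1).1
      have h2 := (hcf p2 hp2.1).1
      have h3 : (D \ p1).ncard + p1.ncard = D.ncard :=
        Set.ncard_diff_add_ncard_of_subset (hPsub p1 hp1.1) hDfin
      have h4 : (D \ p2).ncard + p2.ncard = D.ncard :=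
        Set.ncard_diff_add_ncard_of_subset (hPsub p2 hp2.1) hDfin
      have h5 : R.ncard + (p1 ∪ p2).ncard = D.ncard :=
        Set.ncard_diff_add_ncard_of_subset
          (Set.union_subset (hPsub p1 hp1.1) (hPsub p2 hp2.1)) hDfin
      have h6 : (p1 ∪ p2).ncard = p1.ncard + p2.ncard :=
        Set.ncard_union_eq hdisjpq (hDfin.subset (hPsub p1 hp1.1))
          (hDfin.subset (hPsub p2 hp2.1))
      have h7 : (G.verts (D \ p1) ∪ G.verts (D \ p2)).ncard
            + (G.verts (D \ p1) ∩ G.verts (D \ p2)).ncard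
          = (G.verts (D \ p1)).ncard + (G.verts (D \ p2)).ncard :=
        Set.ncard_union_add_ncard_inter _ _
          (verts_finite_s7 G (hDfin.subset Set.diff_subset))
          (verts_finite_s7 G (hDfin.subset Set.diff_subset))
      have hun : (D \ p1) ∪ (D \ p2) = D := by
        ext x
        constructor
        · rintro (hx | hx)
          exacts [hx.1, hx.1]
        · intro hx
          by_cases hxp : x ∈ p1
          · exact Or.inr ⟨hx, fun hxq => (Set.disjoint_left.1 hdisjpq hxp) hxq⟩
          · exact Or.inl ⟨hx, hxp⟩
      have h8 : G.verts (D \ p1) ∪ G.verts (D \ p2) = G.verts D := by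
        rw [← verts_union, hun]
      have h9 : (G.verts R).ncard ≤ (G.verts (D \ p1) ∩ G.verts (D \ p2)).ncard := by
        refine Set.ncard_le_ncard ?_
          ((verts_finite_s7 G (hDfin.subset Set.diff_subset)).inter_of_left _)
        intro v hv
        refine ⟨verts_mono G ?_ hv, verts_mono G ?_ hv⟩
        · rintro x ⟨hx1, hx2⟩
          exact ⟨hx1, fun h => hx2 (Or.inl h)⟩
        · rintro x ⟨hx1, hx2⟩
          exact ⟨hx1, fun h => hx2 (Or.inr h)⟩
      rw [h8] at h7
      omega
    have hspan : ∀ p ∈ Sing, G.verts (D \ p) = G.verts D := by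
      intro p hp
      have h1 := (hcf p hp.1).1
      have h3 : (D \ p).ncard + p.ncard = D.ncard :=
        Set.ncard_diff_add_ncard_of_subset (hPsub p hp.1) hDfin
      have hp1' : p.ncard = 1 := hp.2
      exact Set.eq_of_subset_of_ncard_le (verts_mono G Set.diff_subset) (by omega)
        (verts_finite_s7 G hDfin)
    have hdeg2 : ∀ v ∈ G.verts D,
        ∃ e1 ∈ D, ∃ e2 ∈ D, e1 ≠ e2 ∧ v ∈ G.ends e1 ∧ v ∈ G.ends e2 := by
      intro v hv
      have hv1 : v ∈ G.verts (D \ p1) := by rw [hspan p1 hp1]; exact hv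
      obtain ⟨e1, he1, hve1⟩ := hv1
      have hv2 : v ∈ G.verts ((D \ p1) \ {e1}) := by
        rw [(hcf p1 hp1.1).2.1 e1 he1, hspan p1 hp1]
        exact hv
      obtain ⟨e2, he2, hve2⟩ := hv2
      exact ⟨e1, he1.1, e2, he2.1.1,
        fun h => he2.2 (Set.mem_singleton_iff.2 h.symm), hve1, hve2⟩
    have hdeg3 : ∀ v ∈ G.verts S, ∃ d ∈ D, ∃ e1 ∈ D, ∃ e2 ∈ D,
        d ≠ e1 ∧ d ≠ e2 ∧ e1 ≠ e2 ∧ v ∈ G.ends d ∧ v ∈ G.ends e1 ∧ v ∈ G.ends e2 := by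
      intro v hv
      obtain ⟨d, hdS, hvd⟩ := hv
      obtain ⟨hdD, hdSing⟩ := (hmemS d).1 hdS
      have hdP : ({d} : Set α) ∈ P := hdSing.1
      have hv1 : v ∈ G.verts (D \ {d}) := by
        rw [hspan {d} hdSing]
        exact ⟨d, hdD, hvd⟩
      obtain ⟨e1, he1, hve1⟩ := hv1
      have hv2 : v ∈ G.verts ((D \ {d}) \ {e1}) := by
        rw [(hcf {d} hdP).2.1 e1 he1, hspan {d} hdSing]
        exact ⟨d, hdD, hvd⟩
      obtain ⟨e2, he2, hve2⟩ := hv2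
      refine ⟨d, hdD, e1, he1.1, e2, he2.1.1, ?_, ?_, ?_, hvd, hve1, hve2⟩
      · exact fun h => he1.2 (Set.mem_singleton_iff.2 h.symm)
      · exact fun h => he2.1.2 (Set.mem_singleton_iff.2 h.symm)
      · exact fun h => he2.2 (Set.mem_singleton_iff.2 h.symm)
    have hends2 : ∀ e ∈ D, ({v | v ∈ G.ends e} : Set V).ncard = 2 := by
      intro e he
      have h1 := hg {e} (Set.singleton_subset_iff.2 (hDG he)) (Set.finite_singleton e)
        ⟨e, rfl⟩ (by rw [Set.ncard_singleton]; omega)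
      rw [Set.ncard_singleton, verts_singleton] at h1
      obtain ⟨a, b, hab⟩ := mem_sym2_eq_pair (G.ends e)
      rw [hab] at h1 ⊢
      have hle : ({a, b} : Set V).ncard ≤ 2 := by
        by_cases hab' : a = b
        · rw [hab', Set.pair_eq_singleton, Set.ncard_singleton]
          omega
        · rw [Set.ncard_pair hab']
      omega
    set DF := hDfin.toFinset with hDF
    set VF := (verts_finite_s7 G hDfin).toFinset with hVF
    have hDFcard : DF.card = D.ncard := (Set.ncard_eq_toFinset_card D hDfin).symm
    have hVFcard : VF.card = (G.verts D).ncard :=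
      (Set.ncard_eq_toFinset_card _ (verts_finite_s7 G hDfin)).symm
    have hsum : ∑ v ∈ VF, (DF.filter (fun e => v ∈ G.ends e)).card = 2 * DF.card := by
      have h2 : ∀ e ∈ DF, (∑ v ∈ VF, if v ∈ G.ends e then 1 else 0) = 2 := by
        intro e he
        rw [← Finset.card_filter]
        have heD : e ∈ D := by rwa [hDF, Set.Finite.mem_toFinset] at he
        have hcoe : ((VF.filter (fun v => v ∈ G.ends e)) : Set V) = {v | v ∈ G.ends e} := by
          ext v
          simp only [Finset.coe_filter, Set.mem_setOf_eq]
          constructor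
          · rintro ⟨-, h⟩
            exact h
          · intro h
            refine ⟨?_, h⟩
            rw [hVF, Set.Finite.mem_toFinset]
            exact ⟨e, heD, h⟩
        have h3 := hends2 e heD
        rw [← hcoe, Set.ncard_coe_finset] at h3
        exact h3
      calc ∑ v ∈ VF, (DF.filter (fun e => v ∈ G.ends e)).card
          = ∑ v ∈ VF, ∑ e ∈ DF, if v ∈ G.ends e then 1 else 0 :=
            Finset.sum_congr rfl (fun v _ => Finset.card_filter _ _)
        _ = ∑ e ∈ DF, ∑ v ∈ VF, if v ∈ G.ends e then 1 else 0 := Finset.sum_comm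
        _ = ∑ e ∈ DF, 2 := Finset.sum_congr rfl h2
        _ = 2 * DF.card := by rw [Finset.sum_const, smul_eq_mul, mul_comm]
    have hdegtwo : ∀ v ∈ VF, 2 ≤ (DF.filter (fun e => v ∈ G.ends e)).card := by
      intro v hv
      rw [hVF, Set.Finite.mem_toFinset] at hv
      obtain ⟨e1, he1, e2, he2, hne, hv1, hv2⟩ := hdeg2 v hv
      have h1 : e1 ∈ DF.filter (fun e => v ∈ G.ends e) := by
        rw [Finset.mem_filter, hDF, Set.Finite.mem_toFinset]
        exact ⟨he1, hv1⟩
      have h2 : e2 ∈ DF.filter (fun e => v ∈ G.ends e) := by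
        rw [Finset.mem_filter, hDF, Set.Finite.mem_toFinset]
        exact ⟨he2, hv2⟩
      calc 2 = ({e1, e2} : Finset α).card := (Finset.card_pair hne).symm
        _ ≤ _ := Finset.card_le_card (by
            intro x hx
            rcases Finset.mem_insert.1 hx with rfl | hx
            · exact h1
            · rw [Finset.mem_singleton.1 hx]
              exact h2)
    have hsplit := Finset.sum_filter_add_sum_filter_not VF
      (fun v => 3 ≤ (DF.filter (fun e => v ∈ G.ends e)).card)
      (fun v => (DF.filter (fun e => v ∈ G.ends e)).card)
    have hcards := Finset.card_filter_add_card_filter_not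
      (s := VF) (p := fun v => 3 ≤ (DF.filter (fun e => v ∈ G.ends e)).card)
    set B := VF.filter (fun v => 3 ≤ (DF.filter (fun e => v ∈ G.ends e)).card) with hB
    have hA : B.card * 3 ≤ ∑ v ∈ B, (DF.filter (fun e => v ∈ G.ends e)).card := by
      have h := Finset.card_nsmul_le_sum B
        (fun v => (DF.filter (fun e => v ∈ G.ends e)).card) 3
        (fun v hv => (Finset.mem_filter.1 hv).2)
      simpa [smul_eq_mul] using h
    have hCb : (VF.filter (fun v => ¬ 3 ≤ (DF.filter (fun e => v ∈ G.ends e)).card)).card * 2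
        ≤ ∑ v ∈ VF.filter (fun v => ¬ 3 ≤ (DF.filter (fun e => v ∈ G.ends e)).card),
            (DF.filter (fun e => v ∈ G.ends e)).card := by
      have h := Finset.card_nsmul_le_sum
        (VF.filter (fun v => ¬ 3 ≤ (DF.filter (fun e => v ∈ G.ends e)).card))
        (fun v => (DF.filter (fun e => v ∈ G.ends e)).card) 2
        (fun v hv => hdegtwo v (Finset.mem_filter.1 hv).1)
      simpa [smul_eq_mul] using h
    have hBle : B.card ≤ 4 := by omega
    have hVSB : G.verts S ⊆ ↑B := by
      intro v hv
      have hvD : v ∈ G.verts D := verts_mono G hSsub hv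
      obtain ⟨d, hd, e1, he1, e2, he2, h1, h2, h3, hv0, hv1, hv2⟩ := hdeg3 v hv
      rw [Finset.mem_coe, hB, Finset.mem_filter]
      constructor
      · rw [hVF, Set.Finite.mem_toFinset]
        exact hvD
      · calc (3 : ℕ) = ({d, e1, e2} : Finset α).card := by
              rw [Finset.card_insert_of_notMem (by simp [h1, h2]), Finset.card_pair h3]
          _ ≤ _ := Finset.card_le_card (by
              intro x hx
              simp only [Finset.mem_insert, Finset.mem_singleton] at hx
              rcases hx with rfl | rfl | rfl
              · rw [Finset.mem_filter, hDF, Set.Finite.mem_toFinset]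
                exact ⟨hd, hv0⟩
              · rw [Finset.mem_filter, hDF, Set.Finite.mem_toFinset]
                exact ⟨he1, hv1⟩
              · rw [Finset.mem_filter, hDF, Set.Finite.mem_toFinset]
                exact ⟨he2, hv2⟩)
    have hVS4 : (G.verts S).ncard ≤ 4 := by
      have hh := Set.ncard_le_ncard hVSB B.finite_toSet
      rw [Set.ncard_coe_finset] at hh
      omega
    have hS4 : 4 ≤ S.ncard := by omega
    obtain ⟨J, hJS, hJcard⟩ := Set.exists_subset_card_eq hS4
    have hJfin : J.Finite := hSfin.subset hJS
    have hJne : J.Nonempty := (Set.ncard_pos hJfin).1 (by omega)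
    have hgJ := hg J (fun x hx => hDG (hSsub (hJS hx))) hJfin hJne (by omega)
    have hmono : (G.verts J).ncard ≤ (G.verts S).ncard :=
      Set.ncard_le_ncard (verts_mono G hJS) (verts_finite_s7 G hSfin)
    omega

end Paper
end

section
/- For any matroid M, there exists a double circuit D of M with at least two singular classes in its circuit partition if and only if there exist two circuits C_1 and C_2 of M with |C_1 △ C_2| = 2. -/
open Set Matroid

namespace Paper

variable {α : Type*}

section Aux

variable {M : Matroid α} {X Y I C C₁ C₂ D : Set α} {e : α}

lemma rk_bddAbove (M : Matroid α) [M.Finite] (X : Set α) :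
    BddAbove {n : ℕ | ∃ I, I ⊆ X ∧ M.Indep I ∧ I.ncard = n} := by
  refine ⟨M.E.ncard, ?_⟩
  rintro n ⟨I, hIX, hI, rfl⟩
  exact Set.ncard_le_ncard hI.subset_ground M.ground_finite

lemma ncard_le_rk [M.Finite] (hI : M.Indep I) (hIX : I ⊆ X) : I.ncard ≤ rk M X :=
  le_csSup (rk_bddAbove M X) ⟨I, hIX, hI, rfl⟩

lemma basis'_rk_eq [M.Finite] (hI : M.IsBasis' I X) : rk M X = I.ncard := by
  refine le_antisymm (csSup_le ⟨0, ∅, empty_subset X, M.empty_indep, by simp⟩ ?_)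
    (ncard_le_rk hI.indep hI.subset)
  rintro n ⟨J, hJX, hJ, rfl⟩
  obtain ⟨J', hJ', hJJ'⟩ := hJ.subset_isBasis'_of_subset hJX
  have h1 : J'.encard = I.encard := hJ'.encard_eq_encard hI
  have h2 : J.ncard ≤ J'.ncard :=
    Set.ncard_le_ncard hJJ' (M.set_finite J' hJ'.indep.subset_ground)
  rwa [Set.ncard_def, Set.ncard_def, h1, ← Set.ncard_def] at h2

lemma rk_indep [M.Finite] (hI : M.Indep I) : rk M I = I.ncard :=
  basis'_rk_eq hI.isBasis_self.isBasis'

lemma rk_mono (M : Matroid α) [M.Finite] (h : X ⊆ Y) : rk M X ≤ rk M Y := by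
  obtain ⟨I, hI⟩ := M.exists_isBasis' X
  rw [basis'_rk_eq hI]
  exact ncard_le_rk hI.indep (hI.subset.trans h)

lemma rk_closure_eq (M : Matroid α) [M.Finite] (X : Set α) :
    rk M (M.closure X) = rk M X := by
  obtain ⟨I, hI⟩ := M.exists_isBasis' X
  rw [basis'_rk_eq hI, basis'_rk_eq hI.isBasis_closure_right.isBasis']

lemma rk_eq_of_subset_closure [M.Finite] (hXY : X ⊆ Y) (hYX : Y ⊆ M.closure X) :
    rk M Y = rk M X := by
  refine le_antisymm ?_ (rk_mono M hXY)
  have := rk_mono M hYX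
  rwa [rk_closure_eq] at this

lemma rk_add_ncard_le [M.Finite] (h : X ⊆ Y) (hY : Y.Finite) :
    rk M Y + X.ncard ≤ rk M X + Y.ncard := by
  obtain ⟨I, hI⟩ := M.exists_isBasis' X
  obtain ⟨J, hJ, hIJ⟩ := hI.indep.subset_isBasis'_of_subset (hI.subset.trans h)
  have hJfin : J.Finite := hY.subset hJ.subset
  have e1 : (J ∩ X).ncard + (J \ X).ncard = J.ncard :=
    Set.ncard_inter_add_ncard_diff_eq_ncard J X hJfin
  have e2 : (J ∩ X).ncard ≤ rk M X :=
    ncard_le_rk (hJ.indep.subset inter_subset_left) inter_subset_right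
  have e3 : (J \ X).ncard ≤ (Y \ X).ncard :=
    Set.ncard_le_ncard (diff_subset_diff_left hJ.subset) (hY.diff (t := X))
  have e4 : (Y \ X).ncard + X.ncard = Y.ncard := Set.ncard_diff_add_ncard_of_subset h hY
  rw [basis'_rk_eq hJ]
  omega

lemma IsCircuit.finite [M.Finite] (hC : IsCircuit M C) : C.Finite :=
  M.set_finite C hC.1.subset_ground

lemma IsCircuit.mem_closure_diff (hC : IsCircuit M C) (he : e ∈ C) :
    e ∈ M.closure (C \ {e}) := by
  have hI := hC.2 e he
  have hd : M.Dep (insert e (C \ {e})) := by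
    rw [insert_diff_singleton, insert_eq_of_mem he]
    exact hC.1
  exact ((hI.insert_dep_iff).mp hd).1

lemma IsCircuit.diff_nonempty (h1 : IsCircuit M C₁) (h2 : IsCircuit M C₂) (hne : C₁ ≠ C₂) :
    (C₂ \ C₁).Nonempty := by
  rw [Set.diff_nonempty]
  intro hss
  obtain ⟨x, hx⟩ : (C₁ \ C₂).Nonempty := by
    rw [Set.diff_nonempty]
    intro h'
    exact hne (h'.antisymm hss)
  exact h2.1.not_indep ((h1.2 x hx.1).subset (subset_diff_singleton hss hx.2))

lemma two_circuits_rk [M.Finite] (h1 : IsCircuit M C₁) (h2 : IsCircuit M C₂) (hne : C₁ ≠ C₂) :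
    rk M (C₁ ∪ C₂) + 2 ≤ (C₁ ∪ C₂).ncard := by
  have hfin : (C₁ ∪ C₂).Finite := h1.finite.union h2.finite
  obtain ⟨I, hI⟩ := M.exists_isBasis' (C₁ ∪ C₂)
  rw [basis'_rk_eq hI]
  by_contra hlt
  push_neg at hlt
  have hIfin : I.Finite := hfin.subset hI.subset
  have hIne : I ≠ C₁ ∪ C₂ := by
    rintro rfl
    exact h1.1.not_indep (hI.indep.subset subset_union_left)
  have hdcard : ((C₁ ∪ C₂) \ I).ncard + I.ncard = (C₁ ∪ C₂).ncard :=
    Set.ncard_diff_add_ncard_of_subset hI.subset hfin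
  have hpos : ((C₁ ∪ C₂) \ I).Nonempty := by
    rw [Set.diff_nonempty]
    exact fun hs => hIne (hI.subset.antisymm hs)
  have h1le : 1 ≤ ((C₁ ∪ C₂) \ I).ncard := (Set.ncard_pos ((hfin.diff (t := I)))).mpr hpos
  have hd1 : ((C₁ ∪ C₂) \ I).ncard = 1 := by omega
  obtain ⟨z, hz⟩ := Set.ncard_eq_one.mp hd1
  have hmem : ∀ x ∈ C₁ ∪ C₂, x ≠ z → x ∈ I := by
    intro x hx hxz
    by_contra hxI
    have : x ∈ (C₁ ∪ C₂) \ I := ⟨hx, hxI⟩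
    rw [hz] at this
    exact hxz this
  have hzC₁ : z ∈ C₁ := by
    by_contra h
    exact h1.1.not_indep (hI.indep.subset fun x hx =>
      hmem x (subset_union_left hx) (fun he => h (he ▸ hx)))
  obtain ⟨y, hy⟩ := h1.diff_nonempty h2 hne
  have hyz : y ≠ z := fun h => hy.2 (h ▸ hzC₁)
  have hyI : y ∈ I := hmem y (subset_union_right hy.1) hyz
  have hsub1 : C₁ \ {z} ⊆ I \ {y} := by
    rintro x ⟨hx1, hx2⟩
    exact ⟨hmem x (subset_union_left hx1) (by simpa using hx2),
      by simp; rintro rfl; exact hy.2 hx1⟩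
  have hzcl : z ∈ M.closure (I \ {y}) :=
    M.closure_mono hsub1 (h1.mem_closure_diff hzC₁)
  have hsub2 : C₂ \ {y} ⊆ M.closure (I \ {y}) := by
    rintro x ⟨hx1, hx2⟩
    rcases eq_or_ne x z with rfl | hxz
    · exact hzcl
    · refine M.subset_closure (I \ {y}) (diff_subset.trans hI.indep.subset_ground)
        ⟨hmem x (subset_union_right hx1) hxz, by simpa using hx2⟩
  have hycl : y ∈ M.closure (I \ {y}) :=
    (M.closure_subset_closure_of_subset_closure hsub2) (h2.mem_closure_diff hy.1)
  exact hI.indep.notMem_closure_diff_of_mem hyI hycl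

lemma exists_circuit_subset_aux [M.Finite] :
    ∀ (n : ℕ) (X : Set α), X.ncard = n → M.Dep X → ∃ C, C ⊆ X ∧ IsCircuit M C := by
  intro n
  induction n using Nat.strong_induction_on with
  | _ n ih =>
    intro X hn hX
    by_cases h : ∀ x ∈ X, M.Indep (X \ {x})
    · exact ⟨X, Subset.rfl, hX, h⟩
    · push_neg at h
      obtain ⟨x, hxX, hxI⟩ := h
      have hfin : X.Finite := M.set_finite X hX.subset_ground
      have hdep : M.Dep (X \ {x}) := ⟨hxI, diff_subset.trans hX.subset_ground⟩
      have hlt : (X \ {x}).ncard < n := by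
        subst hn
        exact Set.ncard_diff_singleton_lt_of_mem hxX hfin
      obtain ⟨C, hCs, hC⟩ := ih _ hlt _ rfl hdep
      exact ⟨C, hCs.trans diff_subset, hC⟩

lemma exists_circuit_subset [M.Finite] (hX : M.Dep X) : ∃ C, C ⊆ X ∧ IsCircuit M C :=
  exists_circuit_subset_aux X.ncard X rfl hX

end Aux

/-- `M` has a double circuit with at least two singular classes iff it has
two circuits whose symmetric difference has exactly two elements. -/
theorem double_circuit_two_singular_iff_circuits_symmdiff_two
    {α : Type*} (M : Matroid α) [M.Finite] :
    (∃ D P, DoubleCircuit M D ∧ IsCircuitPartition M D P ∧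
        2 ≤ {p ∈ P | p.ncard = 1}.ncard) ↔
      ∃ C₁ C₂, IsCircuit M C₁ ∧ IsCircuit M C₂ ∧ (symmDiff C₁ C₂).ncard = 2 := by

  constructor
  · rintro ⟨D, P, hD, ⟨hPne, hPsub, hPpart, hPcirc⟩, hcount⟩
    have hfinS : {p ∈ P | p.ncard = 1}.Finite := by
      by_contra h
      rw [Set.Infinite.ncard (fun hf => h hf)] at hcount
      omega
    have hlt : 1 < {p ∈ P | p.ncard = 1}.ncard := by omega
    obtain ⟨p₁, p₂, hp₁, hp₂, hne⟩ := (Set.one_lt_ncard_iff hfinS).mp hlt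
    obtain ⟨a, rfl⟩ := Set.ncard_eq_one.mp hp₁.2
    obtain ⟨b, rfl⟩ := Set.ncard_eq_one.mp hp₂.2
    have hab : a ≠ b := by simpa using hne
    have haD : a ∈ D := hPsub _ hp₁.1 rfl
    have hbD : b ∈ D := hPsub _ hp₂.1 rfl
    have hC1 := (hPcirc (D \ {a})).mpr ⟨{a}, hp₁.1, rfl⟩
    have hC2 := (hPcirc (D \ {b})).mpr ⟨{b}, hp₂.1, rfl⟩
    refine ⟨D \ {a}, D \ {b}, hC1.1, hC2.1, ?_⟩
    have hsd : symmDiff (D \ {a}) (D \ {b}) = {b, a} := by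
      ext x
      simp only [Set.mem_symmDiff, mem_diff, mem_singleton_iff, mem_insert_iff]
      constructor
      · rintro (⟨⟨hxD, hxa⟩, h⟩ | ⟨⟨hxD, hxb⟩, h⟩)
        · left; by_contra hxb; exact h ⟨hxD, hxb⟩
        · right; by_contra hxa; exact h ⟨hxD, hxa⟩
      · rintro (rfl | rfl)
        · exact Or.inl ⟨⟨hbD, fun h => hab h.symm⟩, fun h => h.2 rfl⟩
        · exact Or.inr ⟨⟨haD, hab⟩, fun h => h.2 rfl⟩
    rw [hsd]
    exact Set.ncard_pair (Ne.symm hab)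
  · rintro ⟨C₁, C₂, h1, h2, hcard⟩
    have hne : C₁ ≠ C₂ := by
      rintro rfl
      rw [symmDiff_self] at hcard
      simp at hcard
    have hf1 : C₁.Finite := h1.finite
    have hf2 : C₂.Finite := h2.finite
    have hd12 : Disjoint (C₁ \ C₂) (C₂ \ C₁) := disjoint_sdiff_sdiff
    have hsum : (C₁ \ C₂).ncard + (C₂ \ C₁).ncard = 2 := by
      rw [← Set.ncard_union_eq hd12 (hf1.diff (t := C₂)) (hf2.diff (t := C₁)), ← Set.symmDiff_def]
      exact hcard
    have hne1 : (C₁ \ C₂).Nonempty := h2.diff_nonempty h1 hne.symm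
    have hne2 : (C₂ \ C₁).Nonempty := h1.diff_nonempty h2 hne
    have hpos1 : 0 < (C₁ \ C₂).ncard := (Set.ncard_pos (hf1.diff (t := C₂))).mpr hne1
    have hpos2 : 0 < (C₂ \ C₁).ncard := (Set.ncard_pos (hf2.diff (t := C₁))).mpr hne2
    have hc1 : (C₁ \ C₂).ncard = 1 := by omega
    have hc2 : (C₂ \ C₁).ncard = 1 := by omega
    obtain ⟨a, haEq⟩ := Set.ncard_eq_one.mp hc1
    obtain ⟨b, hbEq⟩ := Set.ncard_eq_one.mp hc2
    have haC : a ∈ C₁ \ C₂ := haEq ▸ rfl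
    have hbC : b ∈ C₂ \ C₁ := hbEq ▸ rfl
    have hab : a ≠ b := fun h => hbC.2 (h ▸ haC.1)
    set D := C₁ ∪ C₂ with hDdef
    set K := C₁ ∩ C₂ with hKdef
    have hK1 : C₁ \ {a} = K := by
      ext x
      simp only [mem_diff, mem_singleton_iff, hKdef, mem_inter_iff]
      constructor
      · rintro ⟨hx1, hxa⟩
        refine ⟨hx1, ?_⟩
        by_contra hx2
        have hmem : x ∈ C₁ \ C₂ := ⟨hx1, hx2⟩
        rw [haEq] at hmem
        exact hxa hmem
      · rintro ⟨hx1, hx2⟩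
        exact ⟨hx1, fun h => haC.2 (h ▸ hx2)⟩
    have hK2 : C₂ \ {b} = K := by
      ext x
      simp only [mem_diff, mem_singleton_iff, hKdef, mem_inter_iff]
      constructor
      · rintro ⟨hx2, hxb⟩
        refine ⟨?_, hx2⟩
        by_contra hx1
        have hmem : x ∈ C₂ \ C₁ := ⟨hx2, hx1⟩
        rw [hbEq] at hmem
        exact hxb hmem
      · rintro ⟨hx1, hx2⟩
        exact ⟨hx2, fun h => hbC.2 (h ▸ hx1)⟩
    have hKind : M.Indep K := hK1 ▸ h1.2 a haC.1
    have hKE : K ⊆ M.E := hKind.subset_ground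
    have hDE : D ⊆ M.E := union_subset h1.1.subset_ground h2.1.subset_ground
    have hDfin : D.Finite := hf1.union hf2
    have hKD : K ⊆ D := inter_subset_left.trans subset_union_left
    have hDcl : D ⊆ M.closure K := by
      rintro x (hx | hx)
      · rcases eq_or_ne x a with rfl | hxa
        · have := h1.mem_closure_diff haC.1
          rwa [hK1] at this
        · exact M.subset_closure K hKE (hK1 ▸ (⟨hx, by simpa using hxa⟩ : x ∈ C₁ \ {a}))
      · rcases eq_or_ne x b with rfl | hxb
        · have := h2.mem_closure_diff hbC.1
          rwa [hK2] at this
        · exact M.subset_closure K hKE (hK2 ▸ (⟨hx, by simpa using hxb⟩ : x ∈ C₂ \ {b}))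
    have hrkD : rk M D = K.ncard := by
      rw [rk_eq_of_subset_closure hKD hDcl, rk_indep hKind]
    have hDK : D \ K = symmDiff C₁ C₂ := by
      rw [Set.symmDiff_def]
      ext x
      simp only [hDdef, hKdef, mem_diff, mem_union, mem_inter_iff]
      tauto
    have hDcard : D.ncard = K.ncard + 2 := by
      have h5 : (D \ K).ncard + K.ncard = D.ncard :=
        Set.ncard_diff_add_ncard_of_subset hKD hDfin
      rw [hDK, hcard] at h5
      omega
    have hrk_del : ∀ d ∈ D, rk M (D \ {d}) = rk M D := by
      intro d hd
      have hcl : D ⊆ M.closure (D \ {d}) := by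
        have hdcl : d ∈ M.closure (D \ {d}) := by
          rcases hd with hd1 | hd2
          · exact M.closure_mono (diff_subset_diff_left subset_union_left)
              (h1.mem_closure_diff hd1)
          · exact M.closure_mono (diff_subset_diff_left subset_union_right)
              (h2.mem_closure_diff hd2)
        intro x hx
        rcases eq_or_ne x d with rfl | hxd
        · exact hdcl
        · exact M.subset_closure _ (diff_subset.trans hDE) ⟨hx, by simpa using hxd⟩
      exact (rk_eq_of_subset_closure diff_subset hcl).symm
    have hdc : DoubleCircuit M D := ⟨hDE, hDfin, by rw [hrkD, hDcard], hrk_del⟩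
    set P := {p | ∃ C, IsCircuit M C ∧ C ⊆ D ∧ p = D \ C} with hPdef
    have hproper : ∀ C, IsCircuit M C → C ⊆ D → (D \ C).Nonempty := by
      intro C hC hCD
      rw [Set.diff_nonempty]
      intro hDC
      have haD : a ∈ D := subset_union_left haC.1
      have hind : M.Indep (D \ {a}) := by
        have := hC.2 a (hDC haD)
        have hCeq : C = D := hCD.antisymm hDC
        rwa [hCeq] at this
      have e1 : rk M (D \ {a}) = (D \ {a}).ncard := rk_indep hind
      have e2 : (D \ {a}).ncard = D.ncard - 1 := Set.ncard_diff_singleton_of_mem haD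
      have e3 := hrk_del a haD
      omega
    have huniq : ∀ Ca Cb, IsCircuit M Ca → IsCircuit M Cb → Ca ⊆ D → Cb ⊆ D →
        ∀ d ∈ D, d ∉ Ca → d ∉ Cb → Ca = Cb := by
      intro Ca Cb hCa hCb hCaD hCbD d hd hda hdb
      by_contra hnecc
      have h2rk := two_circuits_rk hCa hCb hnecc
      have hsubd : Ca ∪ Cb ⊆ D \ {d} :=
        union_subset (subset_diff_singleton hCaD hda) (subset_diff_singleton hCbD hdb)
      have hnull := rk_add_ncard_le (M := M) hsubd (hDfin.diff (t := ({d} : Set α)))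
      have e2 : (D \ {d}).ncard = D.ncard - 1 := Set.ncard_diff_singleton_of_mem hd
      have e3 := hrk_del d hd
      omega
    have hexist : ∀ d ∈ D, ∃ C, IsCircuit M C ∧ C ⊆ D \ {d} := by
      intro d hd
      have hdep : M.Dep (D \ {d}) := by
        rw [dep_iff]
        refine ⟨fun hind => ?_, diff_subset.trans hDE⟩
        have e1 := rk_indep hind
        have e2 : (D \ {d}).ncard = D.ncard - 1 := Set.ncard_diff_singleton_of_mem hd
        have e3 := hrk_del d hd
        omega
      obtain ⟨C, hCs, hC⟩ := exists_circuit_subset hdep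
      exact ⟨C, hC, hCs⟩
    have hpart : ∀ d ∈ D, ∃! p, p ∈ P ∧ d ∈ p := by
      intro d hd
      obtain ⟨C, hC, hCs⟩ := hexist d hd
      have hCD : C ⊆ D := hCs.trans diff_subset
      have hdC : d ∉ C := fun h => (hCs h).2 rfl
      refine ⟨D \ C, ⟨⟨C, hC, hCD, rfl⟩, hd, hdC⟩, ?_⟩
      rintro p ⟨⟨C', hC', hC'D, rfl⟩, hdp⟩
      rw [huniq C' C hC' hC hC'D hCD d hd hdp.2 hdC]
    have hchar : ∀ C, (IsCircuit M C ∧ C ⊆ D) ↔ ∃ p ∈ P, C = D \ p := by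
      intro C
      constructor
      · rintro ⟨hC, hCD⟩
        exact ⟨D \ C, ⟨C, hC, hCD, rfl⟩, (Set.diff_diff_cancel_left hCD).symm⟩
      · rintro ⟨p, ⟨C', hC', hC'D, rfl⟩, rfl⟩
        rw [Set.diff_diff_cancel_left hC'D]
        exact ⟨hC', hC'D⟩
    have hmemA : ({a} : Set α) ∈ P :=
      ⟨C₂, h2, subset_union_right, by rw [hDdef, Set.union_diff_right, haEq]⟩
    have hmemB : ({b} : Set α) ∈ P :=
      ⟨C₁, h1, subset_union_left, by rw [hDdef, Set.union_diff_left, hbEq]⟩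
    have hsubP : {p ∈ P | p.ncard = 1} ⊆ {s | s ⊆ D} := by
      rintro p ⟨⟨C, hC, hCD, rfl⟩, -⟩
      exact diff_subset
    have hfinP : {p ∈ P | p.ncard = 1}.Finite := hDfin.finite_subsets.subset hsubP
    refine ⟨D, P, hdc, ⟨?_, ?_, hpart, hchar⟩, ?_⟩
    · rintro p ⟨C, hC, hCD, rfl⟩
      exact hproper C hC hCD
    · rintro p ⟨C, hC, hCD, rfl⟩
      exact diff_subset
    · have hA : ({a} : Set α) ∈ {p ∈ P | p.ncard = 1} := ⟨hmemA, Set.ncard_singleton a⟩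
      have hB : ({b} : Set α) ∈ {p ∈ P | p.ncard = 1} := ⟨hmemB, Set.ncard_singleton b⟩
      have hAB : ({a} : Set α) ≠ {b} := by simpa using hab
      have := (Set.one_lt_ncard hfinP).mpr ⟨_, hA, _, hB, hAB⟩
      omega

end Paper
end
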